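/- Let L be a sectionally complemented modular lattice and let I be an ideal of L such that for all x, y ∈ L, if x is perspective to y and y ∈ I then x ∈ I. Then the relation x ≡_I y, defined by the existence of u ∈ I with x ∨ u = y ∨ u, is a lattice congruence on L. -/
import Mathlib


variable {L : Type*} [Lattice L] [OrderBot L]

/-- Perspectivity: `x ∼ y` iff they have a common complement-like axis `z`. -/
def Perspective (x y : L) : Prop :=
  ∃ z : L, x ⊔ z = y ⊔ z ∧ x ⊓ z = ⊥ ∧ y ⊓ z = ⊥

/-- Key lemma: if `p ⊓ a = ⊥` and `p ≤ a ⊔ u` with `u ∈ I`, then `p ∈ I`. -/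
lemma lemA [IsModularLattice L]
    (hsc : ∀ a b : L, b ≤ a → ∃ c : L, b ⊓ c = ⊥ ∧ b ⊔ c = a)
    (I : Set L)
    (hdown : ∀ x y : L, x ≤ y → y ∈ I → x ∈ I)
    (hpersp : ∀ x y : L, Perspective x y → y ∈ I → x ∈ I)
    {a p u : L} (hu : u ∈ I) (hpa : p ⊓ a = ⊥) (hle : p ≤ a ⊔ u) : p ∈ I := by
  set u' := u ⊓ (a ⊔ p) with hu'def
  have hu' : u' ∈ I := hdown _ _ inf_le_left hu
  have h1 : a ⊔ u' = a ⊔ p := by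
    have hm : (a ⊔ u) ⊓ (a ⊔ p) = a ⊔ u' := sup_inf_assoc_of_le u le_sup_left
    have hle2 : a ⊔ p ≤ a ⊔ u := sup_le le_sup_left hle
    rw [← hm, inf_eq_right.mpr hle2]
  obtain ⟨w, hw1, hw2⟩ := hsc u' (a ⊓ u') inf_le_right
  have hwu' : w ≤ u' := le_trans le_sup_right hw2.le
  have hwI : w ∈ I := hdown _ _ hwu' hu'
  have hwa : w ⊓ a = ⊥ := by
    have : w ⊓ a ≤ a ⊓ u' ⊓ w := by
      simp only [le_inf_iff]
      exact ⟨⟨inf_le_right, le_trans inf_le_left hwu'⟩, inf_le_left⟩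
    exact le_bot_iff.mp (hw1 ▸ this)
  have haw : a ⊔ w = a ⊔ p := by
    calc a ⊔ w = a ⊔ ((a ⊓ u') ⊔ w) := by rw [← sup_assoc, sup_inf_self]
    _ = a ⊔ u' := by rw [hw2]
    _ = a ⊔ p := h1
  exact hpersp p w ⟨a, by rw [sup_comm p a, sup_comm w a, haw], hpa, hwa⟩ hwI

/-- Comparable meet lemma. -/
lemma lemB [IsModularLattice L]
    (hsc : ∀ a b : L, b ≤ a → ∃ c : L, b ⊓ c = ⊥ ∧ b ⊔ c = a)
    (I : Set L)
    (hdown : ∀ x y : L, x ≤ y → y ∈ I → x ∈ I)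
    (hpersp : ∀ x y : L, Perspective x y → y ∈ I → x ∈ I)
    {a b u : L} (hab : a ≤ b) (hu : u ∈ I) (h : a ⊔ u = b ⊔ u) (y : L) :
    ∃ p ∈ I, (a ⊓ y) ⊔ p = (b ⊓ y) ⊔ p := by
  obtain ⟨q, hq1, hq2⟩ := hsc b a hab
  have hqI : q ∈ I := by
    refine lemA hsc I hdown hpersp hu (a := a) ?_ ?_
    · rw [inf_comm]; exact hq1
    · calc q ≤ b := le_trans le_sup_right hq2.le
      _ ≤ b ⊔ u := le_sup_left
      _ = a ⊔ u := h.symm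
  obtain ⟨p, hp1, hp2⟩ := hsc (b ⊓ y) (a ⊓ y) (inf_le_inf_right y hab)
  have hpby : p ≤ b ⊓ y := le_trans le_sup_right hp2.le
  have hpa : p ⊓ a = ⊥ := by
    have : p ⊓ a ≤ (a ⊓ y) ⊓ p := by
      simp only [le_inf_iff]
      exact ⟨⟨inf_le_right, le_trans inf_le_left (le_trans hpby inf_le_right)⟩, inf_le_left⟩
    exact le_bot_iff.mp (hp1 ▸ this)
  have hpI : p ∈ I := lemA hsc I hdown hpersp hqI hpa
    (le_trans hpby (le_trans inf_le_left hq2.ge))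
  refine ⟨p, hpI, ?_⟩
  rw [hp2, sup_eq_left.mpr (le_trans le_sup_right hp2.le)]

/-- Let `L` be a sectionally complemented modular lattice and
`I` an ideal of `L` closed under perspectivity. Then the relation
`x ≡_I y ⇔ ∃ u ∈ I, x ⊔ u = y ⊔ u` is a lattice congruence on `L`. -/
theorem stmt15 [IsModularLattice L]
    (hsc : ∀ a b : L, b ≤ a → ∃ c : L, b ⊓ c = ⊥ ∧ b ⊔ c = a)
    (I : Set L) (hne : I.Nonempty)
    (hdown : ∀ x y : L, x ≤ y → y ∈ I → x ∈ I)
    (hjoin : ∀ x ∈ I, ∀ y ∈ I, x ⊔ y ∈ I)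
    (hpersp : ∀ x y : L, Perspective x y → y ∈ I → x ∈ I) :
    Equivalence (fun x y : L => ∃ u ∈ I, x ⊔ u = y ⊔ u) ∧
    (∀ x y x' y' : L,
      (∃ u ∈ I, x ⊔ u = x' ⊔ u) → (∃ u ∈ I, y ⊔ u = y' ⊔ u) →
      (∃ u ∈ I, (x ⊔ y) ⊔ u = (x' ⊔ y') ⊔ u) ∧
      (∃ u ∈ I, (x ⊓ y) ⊔ u = (x' ⊓ y') ⊔ u)) := by
  obtain ⟨u₀, hu₀⟩ := hne
  have htrans : ∀ x y z : L, (∃ u ∈ I, x ⊔ u = y ⊔ u) → (∃ u ∈ I, y ⊔ u = z ⊔ u) →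
      (∃ u ∈ I, x ⊔ u = z ⊔ u) := by
    rintro x y z ⟨u, hu, hxy⟩ ⟨v, hv, hyz⟩
    refine ⟨u ⊔ v, hjoin u hu v hv, ?_⟩
    calc x ⊔ (u ⊔ v) = (x ⊔ u) ⊔ v := by rw [sup_assoc]
    _ = (y ⊔ u) ⊔ v := by rw [hxy]
    _ = (y ⊔ v) ⊔ u := by rw [sup_assoc, sup_comm u v, ← sup_assoc]
    _ = (z ⊔ v) ⊔ u := by rw [hyz]
    _ = z ⊔ (u ⊔ v) := by rw [sup_assoc, sup_comm v u]
  -- meet compatibility with one side fixed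
  have hmeet1 : ∀ x x' y : L, (∃ u ∈ I, x ⊔ u = x' ⊔ u) →
      (∃ u ∈ I, (x ⊓ y) ⊔ u = (x' ⊓ y) ⊔ u) := by
    rintro x x' y ⟨u, hu, hxx⟩
    have h1 : x ⊔ u = (x ⊔ x') ⊔ u := by
      rw [sup_assoc, sup_comm x' u, ← sup_assoc, hxx, sup_assoc, sup_comm u x', ← sup_assoc,
        sup_idem]
    have h2 : x' ⊔ u = (x ⊔ x') ⊔ u := by rw [← hxx]; exact h1
    obtain ⟨p, hp, hp2⟩ := lemB hsc I hdown hpersp (le_sup_left : x ≤ x ⊔ x') hu h1 y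
    obtain ⟨q, hq, hq2⟩ := lemB hsc I hdown hpersp (le_sup_right : x' ≤ x ⊔ x') hu h2 y
    exact htrans _ _ _ ⟨p, hp, hp2⟩ ⟨q, hq, hq2.symm⟩
  constructor
  · refine ⟨fun x => ⟨u₀, hu₀, rfl⟩, ?_, ?_⟩
    · rintro x y ⟨u, hu, h⟩; exact ⟨u, hu, h.symm⟩
    · intro x y z h1 h2; exact htrans x y z h1 h2
  · rintro x y x' y' ⟨u, hu, hx⟩ ⟨v, hv, hy⟩
    constructor
    · refine ⟨u ⊔ v, hjoin u hu v hv, ?_⟩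
      calc (x ⊔ y) ⊔ (u ⊔ v) = (x ⊔ u) ⊔ (y ⊔ v) := by
            rw [sup_assoc, sup_assoc, ← sup_assoc y u v, sup_comm y u, sup_assoc u y v]
      _ = (x' ⊔ u) ⊔ (y' ⊔ v) := by rw [hx, hy]
      _ = (x' ⊔ y') ⊔ (u ⊔ v) := by
            rw [sup_assoc, sup_assoc, ← sup_assoc u y' v, sup_comm u y', sup_assoc y' u v]
    · have s1 := hmeet1 x x' y ⟨u, hu, hx⟩
      have s2 : ∃ w ∈ I, (x' ⊓ y) ⊔ w = (x' ⊓ y') ⊔ w := by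
        have := hmeet1 y y' x' ⟨v, hv, hy⟩
        obtain ⟨w, hw, hw2⟩ := this
        exact ⟨w, hw, by rw [inf_comm x' y, inf_comm x' y', hw2]⟩
      exact htrans _ _ _ s1 s2
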